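/- For any n ≥ 1 and d ≥ 1, in the field ℚ(t) with H treated as nilpotent of order n+1 (i.e., working in ℚ(t)[H]/(H^{n+1})), the J-function J_d = ∏_{k=1}^d (H + kt)^{-(n+1)} has H^0-coefficient equal to 1/((d!)^{n+1} t^{d(n+1)}), and its H^1-coefficient equals −(n+1)/((d!)^{n+1} t^{d(n+1)+1}) · ∑_{k=1}^d 1/k. -/

import Mathlib

open Polynomial in
private lemma deriv_fin_prod {R ι : Type*} [CommRing R] [DecidableEq ι] (s : Finset ι)
    (f : ι → R[X]) :
    derivative (∏ i ∈ s, f i) = ∑ i ∈ s, (∏ j ∈ s.erase i, f j) * derivative (f i) := by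
  rw [Finset.prod_eq_multiset_prod, Polynomial.derivative_prod, Finset.sum_eq_multiset_sum]
  congr 1

open Polynomial in
theorem stmt_17 (n d : ℕ) (hn : 1 ≤ n) (hd : 1 ≤ d) :
    ∀ J : Polynomial (RatFunc ℚ),
      (X : Polynomial (RatFunc ℚ)) ^ (n + 1) ∣
          (∏ k ∈ Finset.Icc 1 d, (X + C ((k : RatFunc ℚ) * RatFunc.X))) ^ (n + 1) * J - 1 →
        J.coeff 0 = 1 / ((d.factorial : RatFunc ℚ) ^ (n + 1) * RatFunc.X ^ (d * (n + 1))) ∧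
        J.coeff 1 = -((n : RatFunc ℚ) + 1) /
              ((d.factorial : RatFunc ℚ) ^ (n + 1) * RatFunc.X ^ (d * (n + 1) + 1)) *
            ∑ k ∈ Finset.Icc 1 d, 1 / (k : RatFunc ℚ) := by
  haveI : CharZero (RatFunc ℚ) :=
    charZero_of_injective_algebraMap (algebraMap ℚ (RatFunc ℚ)).injective
  intro J hJ
  set t : RatFunc ℚ := RatFunc.X with ht_def
  have ht : t ≠ 0 := RatFunc.X_ne_zero
  set P : Polynomial (RatFunc ℚ) :=
    ∏ k ∈ Finset.Icc 1 d, (X + C ((k : RatFunc ℚ) * t)) with hP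
  -- coefficient equations from the divisibility
  rw [Polynomial.X_pow_dvd_iff] at hJ
  have h0 := hJ 0 (by omega)
  have h1 := hJ 1 (by omega)
  rw [Polynomial.coeff_sub, Polynomial.coeff_one, sub_eq_zero] at h0 h1
  norm_num at h0 h1
  -- coeff 0 of P
  have hfac : ((d.factorial : RatFunc ℚ)) ≠ 0 :=
    Nat.cast_ne_zero.mpr d.factorial_ne_zero
  have hP0 : P.coeff 0 = (d.factorial : RatFunc ℚ) * t ^ d := by
    rw [Polynomial.coeff_zero_eq_eval_zero, hP, Polynomial.eval_prod]
    simp only [Polynomial.eval_add, Polynomial.eval_X, Polynomial.eval_C, zero_add]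
    rw [Finset.prod_mul_distrib, Finset.prod_const, Nat.card_Icc]
    norm_num
    left
    rw [← Nat.cast_prod]
    norm_cast
    rw [← Finset.Ico_add_one_right_eq_Icc, Finset.prod_Ico_id_eq_factorial]
  have hP0ne : P.coeff 0 ≠ 0 := by
    rw [hP0]; exact mul_ne_zero hfac (pow_ne_zero _ ht)
  -- coeff 1 of P
  have hP1 : P.coeff 1 = P.coeff 0 * t⁻¹ * ∑ k ∈ Finset.Icc 1 d, ((k : RatFunc ℚ))⁻¹ := by
    have hc : P.coeff 1 = (Polynomial.derivative P).coeff 0 := by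
      rw [Polynomial.coeff_derivative]; norm_num
    rw [hc, hP, deriv_fin_prod, Polynomial.finset_sum_coeff]
    have step : ∀ k ∈ Finset.Icc 1 d,
        ((∏ j ∈ (Finset.Icc 1 d).erase k, (X + C ((j : RatFunc ℚ) * t))) *
          Polynomial.derivative (X + C ((k : RatFunc ℚ) * t))).coeff 0
        = P.coeff 0 * t⁻¹ * ((k : RatFunc ℚ))⁻¹ := by
      intro k hk
      have hk1 : 1 ≤ k := (Finset.mem_Icc.mp hk).1
      have hkne : ((k : RatFunc ℚ)) ≠ 0 := Nat.cast_ne_zero.mpr (by omega)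
      have hderiv : Polynomial.derivative (X + C ((k : RatFunc ℚ) * t)) = 1 := by simp
      rw [hderiv, mul_one, Polynomial.coeff_zero_eq_eval_zero, Polynomial.eval_prod]
      simp only [Polynomial.eval_add, Polynomial.eval_X, Polynomial.eval_C, zero_add]
      have hmul := Finset.mul_prod_erase (Finset.Icc 1 d)
        (fun j => ((j : RatFunc ℚ)) * t) hk
      have hPe : P.coeff 0 = ∏ j ∈ Finset.Icc 1 d, ((j : RatFunc ℚ)) * t := by
        rw [Polynomial.coeff_zero_eq_eval_zero, hP, Polynomial.eval_prod]
        simp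
      rw [hPe, ← hmul]
      field_simp
      ring
      exact Finset.prod_congr rfl (fun _ _ => mul_comm _ _)
    rw [Finset.sum_congr rfl step, ← Finset.mul_sum]
  -- coeff 0 and 1 of P^(n+1)
  have hQ0 : (P ^ (n + 1)).coeff 0 = (P.coeff 0) ^ (n + 1) := by
    rw [Polynomial.coeff_zero_eq_eval_zero, Polynomial.eval_pow,
      ← Polynomial.coeff_zero_eq_eval_zero]
  have hQ1 : (P ^ (n + 1)).coeff 1 = ((n : RatFunc ℚ) + 1) * (P.coeff 0) ^ n * P.coeff 1 := by
    have h : (P ^ (n + 1)).coeff 1 = (Polynomial.derivative (P ^ (n + 1))).coeff 0 := by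
      rw [Polynomial.coeff_derivative]; norm_num
    rw [h, Polynomial.derivative_pow]
    simp only [Nat.add_sub_cancel]
    rw [Polynomial.coeff_zero_eq_eval_zero]
    simp only [Polynomial.eval_mul, Polynomial.eval_pow, Polynomial.eval_C]
    rw [← Polynomial.coeff_zero_eq_eval_zero, ← Polynomial.coeff_zero_eq_eval_zero]
    have h2 : (Polynomial.derivative P).coeff 0 = P.coeff 1 := by
      rw [Polynomial.coeff_derivative]; norm_num
    rw [h2]
    push_cast
    ring
  -- coefficient equations
  have e0 : (P.coeff 0) ^ (n + 1) * J.coeff 0 = 1 := by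
    rw [← hQ0]; exact h0
  have e1 : (P.coeff 0) ^ (n + 1) * J.coeff 1 +
      ((n : RatFunc ℚ) + 1) * (P.coeff 0) ^ n * P.coeff 1 * J.coeff 0 = 0 := by
    have hh := h1
    rw [Polynomial.coeff_mul] at hh
    simp only [Finset.Nat.antidiagonal_succ, Finset.Nat.antidiagonal_zero,
      Finset.sum_cons, Finset.map_singleton, Finset.sum_singleton] at hh
    simp only [Function.Embedding.prodMap, Function.Embedding.coeFn_mk,
      Function.Embedding.refl_apply, Prod.map] at hh
    rw [hQ0, hQ1] at hh
    linear_combination hh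
  have hQ0ne : (P.coeff 0) ^ (n + 1) ≠ 0 := pow_ne_zero _ hP0ne
  have hJ0 : J.coeff 0 = ((P.coeff 0) ^ (n + 1))⁻¹ := by
    field_simp
    linear_combination e0
  have hJ1 : J.coeff 1 = -(((n : RatFunc ℚ) + 1) * (P.coeff 0) ^ n * P.coeff 1 *
      ((P.coeff 0) ^ (n + 1))⁻¹) / (P.coeff 0) ^ (n + 1) := by
    rw [eq_div_iff hQ0ne]
    linear_combination e1 - (((n : RatFunc ℚ) + 1) * (P.coeff 0) ^ n * P.coeff 1) * hJ0
  constructor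
  · rw [hJ0, hP0, mul_pow, ← pow_mul, one_div]
  · rw [hJ1, hP1, hP0]
    have hsum : ∑ k ∈ Finset.Icc 1 d, 1 / ((k : RatFunc ℚ)) =
        ∑ k ∈ Finset.Icc 1 d, ((k : RatFunc ℚ))⁻¹ := by
      simp [one_div]
    rw [hsum]
    field_simp [hfac, ht]
    ring
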